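/- Let y : [0, τ) → ℝ be a non-decreasing function with y(t) > 0 for all t ∈ [0, τ), and suppose there is a constant c₂ > 0 such that y(t) ≥ c₂ ∫₀ᵗ y(s)^((n-1)/n) ds for all t ∈ [0, τ), where n ≥ 1 is a natural number. Then y(t) ≥ (c₂/n)^n · t^n for all t ∈ [0, τ). -/

import Mathlib

open MeasureTheory Set Filter
open scoped Topology

/-- Bernoulli-type inequality: for `0 < v ≤ u` and `0 < p ≤ 1`,
`p * u^(p-1) * (u - v) ≤ u^p - v^p`. -/
lemma stmt0_bernoulli {u v p : ℝ} (hv : 0 < v) (hvu : v ≤ u) (hp0 : 0 < p) (hp1 : p ≤ 1) :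
    p * u ^ (p - 1) * (u - v) ≤ u ^ p - v ^ p := by
  have hu : 0 < u := hv.trans_le hvu
  have hs : (-1 : ℝ) ≤ v / u - 1 := by
    have : 0 < v / u := div_pos hv hu
    linarith
  have hbern := rpow_one_add_le_one_add_mul_self hs hp0.le hp1
  rw [show (1 : ℝ) + (v / u - 1) = v / u by ring] at hbern
  -- hbern : (v/u)^p ≤ 1 + p * (v/u - 1)
  have hdiv : (v / u) ^ p = v ^ p / u ^ p := Real.div_rpow hv.le hu.le p
  rw [hdiv] at hbern
  have hup : 0 < u ^ p := Real.rpow_pos_of_pos hu p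
  have hup1 : u ^ (p - 1) = u ^ p / u := by
    rw [Real.rpow_sub hu, Real.rpow_one]
  have hvp : v ^ p ≤ u ^ p * (1 + p * (v / u - 1)) := by
    rw [div_le_iff₀ hup] at hbern
    linarith [hbern]
  have hune : u ≠ 0 := hu.ne'
  have key : u ^ p * (1 + p * (v / u - 1)) = u ^ p - p * (u ^ p / u) * (u - v) := by
    field_simp
    ring
  rw [key] at hvp
  rw [hup1]
  linarith

/-- ODE comparison lemma: if a positive non-decreasing function `y` on `[0, τ)` satisfies
`y t ≥ c₂ ∫₀ᵗ y(s)^((n-1)/n) ds`, then `y t ≥ (c₂/n)^n t^n`. -/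
theorem stmt0 (n : ℕ) (hn : 1 ≤ n) (τ c₂ : ℝ) (hτ : 0 < τ) (hc₂ : 0 < c₂)
    (y : ℝ → ℝ) (hmono : MonotoneOn y (Ico 0 τ))
    (hpos : ∀ t ∈ Ico (0:ℝ) τ, 0 < y t)
    (hineq : ∀ t ∈ Ico (0:ℝ) τ,
      c₂ * ∫ s in (0:ℝ)..t, (y s) ^ (((n:ℝ) - 1) / n) ≤ y t) :
    ∀ t ∈ Ico (0:ℝ) τ, (c₂ / n) ^ n * t ^ n ≤ y t := by
  intro t₀ ht₀
  obtain ⟨ht₀0, ht₀τ⟩ := ht₀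
  rcases eq_or_lt_of_le ht₀0 with h0 | ht₀pos
  · rw [← h0]
    rw [zero_pow (Nat.one_le_iff_ne_zero.mp hn), mul_zero]
    exact (hpos 0 ⟨le_rfl, hτ⟩).le
  have hn0 : (0:ℝ) < n := by exact_mod_cast hn
  have hn1 : (1:ℝ) ≤ n := by exact_mod_cast hn
  set θ : ℝ := ((n:ℝ) - 1) / n with hθdef
  have hθ0 : 0 ≤ θ := div_nonneg (by linarith) hn0.le
  set p : ℝ := 1 / n with hpdef
  have hp0 : 0 < p := by positivity
  have hp1 : p ≤ 1 := by
    rw [hpdef, div_le_one hn0]; exact hn1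
  have hθp : θ + p = 1 := by
    rw [hθdef, hpdef]; field_simp; ring
  -- the clamped function
  set c : ℝ → ℝ := fun s => min (max s 0) t₀ with hcdef
  have hc_mem : ∀ s, c s ∈ Icc (0:ℝ) t₀ :=
    fun s => ⟨le_min (le_max_right s 0) ht₀0, min_le_right _ _⟩
  have hc_mono : Monotone c := fun a b hab =>
    min_le_min (max_le_max hab le_rfl) le_rfl
  have hIcc_sub : Icc (0:ℝ) t₀ ⊆ Ico 0 τ := fun s hs => ⟨hs.1, lt_of_le_of_lt hs.2 ht₀τ⟩
  set z : ℝ → ℝ := fun s => y (c s) with hzdef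
  have hz_mono : Monotone z := fun a b hab =>
    hmono (hIcc_sub (hc_mem a)) (hIcc_sub (hc_mem b)) (hc_mono hab)
  have hz_pos : ∀ s, 0 < z s := fun s => hpos _ (hIcc_sub (hc_mem s))
  have hc_eq : ∀ s ∈ Icc (0:ℝ) t₀, c s = s := by
    intro s hs
    rw [hcdef]
    simp only [max_eq_left hs.1, min_eq_left hs.2]
  have hz_eq : ∀ s ∈ Icc (0:ℝ) t₀, z s = y s := by
    intro s hs
    rw [hzdef]
    simp only [hc_eq s hs]
  set w : ℝ → ℝ := fun s => z s ^ θ with hwdef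
  have hw_mono : Monotone w := fun a b hab =>
    Real.rpow_le_rpow (hz_pos a).le (hz_mono hab) hθ0
  have hw_pos : ∀ s, 0 < w s := fun s => Real.rpow_pos_of_pos (hz_pos s) θ
  have hw_int : ∀ a b : ℝ, IntervalIntegrable w volume a b := fun a b =>
    hw_mono.intervalIntegrable
  set F : ℝ → ℝ := fun t => ∫ s in (0:ℝ)..t, w s with hFdef
  have hF_cont : Continuous F := intervalIntegral.continuous_primitive hw_int 0
  have hF_inc : ∀ {a b : ℝ}, a ≤ b → (b - a) * w a ≤ F b - F a := by
    intro a b hab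
    have hFba : F b - F a = ∫ s in a..b, w s := by
      simp only [hFdef]
      rw [sub_eq_iff_eq_add, add_comm]
      exact (intervalIntegral.integral_add_adjacent_intervals (hw_int 0 a) (hw_int a b)).symm
    rw [hFba]
    calc (b - a) * w a = ∫ _ in a..b, w a := by
          rw [intervalIntegral.integral_const, smul_eq_mul]
      _ ≤ ∫ s in a..b, w s :=
          intervalIntegral.integral_mono_on hab intervalIntegrable_const (hw_int a b)
            (fun s hs => hw_mono hs.1)
  have hF_mono : Monotone F := fun a b hab => by nlinarith [hF_inc hab, hw_pos a]
  have hF0 : F 0 = 0 := intervalIntegral.integral_same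
  have hF_nonneg : ∀ t, 0 ≤ t → 0 ≤ F t := fun t ht => by
    have := hF_mono ht; rw [hF0] at this; exact this
  have hF_pos : ∀ t, 0 < t → 0 < F t := fun t ht => by
    nlinarith [hF_inc ht.le (a := 0) (b := t), hw_pos 0, hF0]
  have hcF : ∀ x ∈ Icc (0:ℝ) t₀, c₂ * F x ≤ z x := by
    intro x hx
    have hx' : x ∈ Ico (0:ℝ) τ := hIcc_sub hx
    have hFx : F x = ∫ s in (0:ℝ)..x, y s ^ θ := by
      apply intervalIntegral.integral_congr
      intro s hs
      rw [uIcc_of_le hx.1] at hs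
      have hs' : s ∈ Icc (0:ℝ) t₀ := ⟨hs.1, hs.2.trans hx.2⟩
      rw [hwdef]
      simp only [hz_eq s hs']
    rw [hz_eq x hx, hFx]
    exact hineq x hx'
  set C : ℝ := c₂ ^ θ with hCdef
  have hC : 0 < C := Real.rpow_pos_of_pos hc₂ θ
  set g : ℝ → ℝ := fun t => F t ^ p with hgdef
  have hg_cont : Continuous g := by
    rw [continuous_iff_continuousAt]
    exact fun x => hF_cont.continuousAt.rpow_const (Or.inr hp0.le)
  have key : ∀ a ∈ Ioo (0:ℝ) t₀, C / n * (t₀ - a) ≤ g t₀ := by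
    intro a ha
    have hFa : 0 < F a := hF_pos a ha.1
    have main : ∀ ⦃x : ℝ⦄, x ∈ Icc a t₀ →
        (fun t => -g t) x ≤ (fun x => -(g a) + (-(C / n)) * (x - a)) x := by
      refine image_le_of_liminf_slope_right_le_deriv_boundary
        (f := fun t => -g t) (B := fun x => -(g a) + (-(C / n)) * (x - a))
        (B' := fun _ => -(C / n)) ?_ ?_ ?_ ?_ ?_
      · exact hg_cont.neg.continuousOn
      · simp
      · exact fun x _ =>
          ((((hasDerivAt_id x).sub_const a).const_mul (-(C / n))).const_add
            (-(g a))).continuousAt.continuousWithinAt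
      · intro x _
        have := ((((hasDerivAt_id x).sub_const a).const_mul (-(C / n))).const_add
            (-(g a))).hasDerivWithinAt (s := Ici x)
        simpa using this
      · intro x hx r hr
        -- hr : -(C/n) < r
        have hax : 0 < x := lt_of_lt_of_le ha.1 hx.1
        have hxt : x < t₀ := hx.2
        have hFx : 0 < F x := hF_pos x hax
        set h : ℝ → ℝ := fun z' => p * (c₂ * F x) ^ θ * F z' ^ (p - 1) with hhdef
        have hhx : h x = C / n := by
          rw [hhdef]
          simp only
          rw [Real.mul_rpow hc₂.le hFx.le]
          have : F x ^ θ * F x ^ (p - 1) = 1 := by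
            rw [← Real.rpow_add hFx, show θ + (p - 1) = 0 by linarith, Real.rpow_zero]
          calc p * (c₂ ^ θ * F x ^ θ) * F x ^ (p - 1)
              = p * c₂ ^ θ * (F x ^ θ * F x ^ (p - 1)) := by ring
            _ = p * c₂ ^ θ := by rw [this, mul_one]
            _ = C / n := by rw [hpdef, hCdef]; ring
        have htends : Tendsto h (𝓝[>] x) (𝓝 (C / n)) := by
          rw [← hhx]
          have hcont : ContinuousAt h x := by
            apply ContinuousAt.mul continuousAt_const
            exact hF_cont.continuousAt.rpow_const (Or.inl hFx.ne')
          exact hcont.continuousWithinAt.tendsto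
        have hslope : ∀ z' ∈ Ioc x t₀, h z' ≤ slope g x z' := by
          intro z' hz'
          have hxz' : 0 < z' - x := sub_pos.2 hz'.1
          have hFz' : 0 < F z' := hF_pos z' (hax.trans hz'.1)
          have hFxz' : F x ≤ F z' := hF_mono hz'.1.le
          have hq1 : (z' - x) * w x ≤ F z' - F x := hF_inc hz'.1.le
          have hq2 : (c₂ * F x) ^ θ ≤ w x := by
            rw [hwdef]
            exact Real.rpow_le_rpow (by positivity)
              (hcF x ⟨hax.le, hxt.le⟩) hθ0
          have hq3 : p * F z' ^ (p - 1) * (F z' - F x) ≤ F z' ^ p - F x ^ p :=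
            stmt0_bernoulli hFx hFxz' hp0 hp1
          have hFzp : 0 < F z' ^ (p - 1) := Real.rpow_pos_of_pos hFz' _
          have hgdiff : g z' - g x = F z' ^ p - F x ^ p := by simp only [hgdef]
          rw [slope_def_field, le_div_iff₀ hxz', hgdiff]
          have hcfx : 0 ≤ (c₂ * F x) ^ θ := Real.rpow_nonneg (by positivity) θ
          simp only [hhdef]
          nlinarith [mul_le_mul_of_nonneg_left hq2 (by positivity : (0:ℝ) ≤ p * F z' ^ (p - 1) * (z' - x)),
            mul_le_mul_of_nonneg_left hq1 (by positivity : (0:ℝ) ≤ p * F z' ^ (p - 1))]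
        have hev1 : ∀ᶠ z' in 𝓝[>] x, -r < h z' :=
          htends.eventually (eventually_gt_nhds (by linarith))
        have hev2 : ∀ᶠ z' in 𝓝[>] x, z' ∈ Ioc x t₀ :=
          Ioc_mem_nhdsGT_of_mem ⟨le_rfl, hxt⟩
        refine ((hev1.and hev2).mono ?_).frequently
        rintro z' ⟨h1, h2⟩
        have h3 : -r < slope g x z' := lt_of_lt_of_le h1 (hslope z' h2)
        have hxz' : 0 < z' - x := sub_pos.2 h2.1
        rw [slope_def_field] at h3 ⊢
        rw [show -g z' - -g x = -(g z' - g x) by ring, neg_div]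
        linarith
    have hfinal := main (x := t₀) ⟨ha.2.le, le_rfl⟩
    simp only at hfinal
    have hga : 0 ≤ g a := Real.rpow_nonneg (hF_nonneg a ha.1.le) p
    nlinarith [hfinal, hga]
  have hgt : C / n * t₀ ≤ g t₀ := by
    have htt : Tendsto (fun a : ℝ => C / n * (t₀ - a)) (𝓝[>] (0:ℝ)) (𝓝 (C / n * t₀)) := by
      have h1 : Tendsto (fun a : ℝ => C / n * (t₀ - a)) (𝓝 (0:ℝ)) (𝓝 (C / n * (t₀ - 0))) :=
        (continuous_const.mul (continuous_const.sub continuous_id)).tendsto 0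
      rw [sub_zero] at h1
      exact h1.mono_left nhdsWithin_le_nhds
    refine le_of_tendsto htt ?_
    filter_upwards [Ioo_mem_nhdsGT_of_mem (⟨le_rfl, ht₀pos⟩ : (0:ℝ) ∈ Ico 0 t₀)] with a ha
      using key a ha
  -- convert back
  have hgnn : 0 ≤ C / n * t₀ := by positivity
  have hFt₀ : (C / n * t₀) ^ n ≤ F t₀ := by
    have h1 : (g t₀) ^ (n : ℕ) = F t₀ := by
      rw [hgdef]
      simp only
      rw [← Real.rpow_natCast (F t₀ ^ p) n, ← Real.rpow_mul (hF_nonneg t₀ ht₀0),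
        show p * (n:ℝ) = 1 by rw [hpdef]; field_simp, Real.rpow_one]
    calc (C / n * t₀) ^ n ≤ (g t₀) ^ n := pow_le_pow_left₀ hgnn hgt n
      _ = F t₀ := h1
  have hyF := hcF t₀ ⟨ht₀0, le_rfl⟩
  rw [hz_eq t₀ ⟨ht₀0, le_rfl⟩] at hyF
  have hCn : c₂ * C ^ (n : ℕ) = c₂ ^ (n : ℕ) := by
    have h1 : C ^ (n : ℕ) = c₂ ^ ((n:ℝ) - 1) := by
      rw [hCdef, ← Real.rpow_natCast (c₂ ^ θ) n, ← Real.rpow_mul hc₂.le,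
        show θ * (n:ℝ) = (n:ℝ) - 1 by rw [hθdef]; field_simp]
    have h2 : c₂ * c₂ ^ ((n:ℝ) - 1) = c₂ ^ (n:ℕ) := by
      have h3 := Real.rpow_add hc₂ 1 ((n:ℝ) - 1)
      rw [Real.rpow_one] at h3
      rw [← h3, show (1:ℝ) + ((n:ℝ) - 1) = (n:ℝ) by ring, Real.rpow_natCast]
    rw [h1]
    exact h2
  have heq : (c₂ / n) ^ n * t₀ ^ n = c₂ * (C / n * t₀) ^ n := by
    rw [div_pow, mul_pow, div_pow, ← hCn]
    ring
  rw [heq]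
  calc c₂ * (C / n * t₀) ^ n ≤ c₂ * F t₀ := by
        exact mul_le_mul_of_nonneg_left hFt₀ hc₂.le
    _ ≤ y t₀ := hyF
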